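/- Let p > 1, α > 0, and let c₀, k̄ : [0,∞) → ℝ be continuous and nonnegative with ∫₀^∞ c₀(t) dt < ∞ and (∫₀^t k̄(τ) dτ)·(∫_t^∞ c₀(τ) dτ)^{1/(p−1)} → ∞ as t → ∞. Then there is no differentiable function w : [0,∞) → ℝ with w(t) ≥ 0 for all t ≥ 0 and w′(t) ≥ c₀(t) w(t)^p + α k̄(t) for all t ≥ 0. -/

import Mathlib

open MeasureTheory Set Filter

private lemma mono_aux {f f' : ℝ → ℝ} {a b : ℝ} (hab : a ≤ b)
    (hc : ContinuousOn f (Icc a b))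
    (hd : ∀ x ∈ Ioo a b, HasDerivAt f (f' x) x)
    (h0 : ∀ x ∈ Ioo a b, 0 ≤ f' x) : f a ≤ f b := by
  have hmono := monotoneOn_of_deriv_nonneg (convex_Icc a b) hc
    (fun x hx => by
      rw [interior_Icc] at hx
      exact (hd x hx).differentiableAt.differentiableWithinAt)
    (fun x hx => by
      rw [interior_Icc] at hx
      rw [(hd x hx).deriv]; exact h0 x hx)
  exact hmono (left_mem_Icc.2 hab) (right_mem_Icc.2 hab) hab

private lemma primitive_hasDerivAt {g : ℝ → ℝ} (hg : ContinuousOn g (Ici 0))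
    {a s : ℝ} (ha : 0 ≤ a) (hs : 0 < s) :
    HasDerivAt (fun u => ∫ x in a..u, g x) (g s) s := by
  have hsub : uIcc a s ⊆ Ici 0 := fun x hx => le_trans (le_min ha hs.le) hx.1
  have hint : IntervalIntegrable g volume a s :=
    (hg.mono hsub).intervalIntegrable
  refine intervalIntegral.integral_hasDerivAt_right hint ?_ ?_
  · exact (hg.mono (Ioi_subset_Ici le_rfl)).stronglyMeasurableAtFilter isOpen_Ioi s hs
  · exact hg.continuousAt (Ici_mem_nhds hs)

theorem stmt_8 (p α : ℝ) (hp : 1 < p) (hα : 0 < α)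
    (c₀ kbar : ℝ → ℝ)
    (hc_cont : ContinuousOn c₀ (Ici 0)) (hc_nonneg : ∀ t ≥ (0:ℝ), 0 ≤ c₀ t)
    (hk_cont : ContinuousOn kbar (Ici 0)) (hk_nonneg : ∀ t ≥ (0:ℝ), 0 ≤ kbar t)
    (hc_int : IntegrableOn c₀ (Ioi 0))
    (hlim : Tendsto
      (fun t => (∫ τ in (0:ℝ)..t, kbar τ) * (∫ τ in Ioi t, c₀ τ) ^ ((1:ℝ) / (p - 1)))
      atTop atTop) :
    ¬ ∃ w w' : ℝ → ℝ, (∀ t ≥ (0:ℝ), 0 ≤ w t) ∧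
        (∀ t ≥ (0:ℝ), HasDerivAt w (w' t) t) ∧
        (∀ t ≥ (0:ℝ), c₀ t * w t ^ p + α * kbar t ≤ w' t) := by
  rintro ⟨w, w', hw0, hwd, hwi⟩
  have hp1 : (0:ℝ) < p - 1 := by linarith
  set e : ℝ := 1 / (p - 1) with he
  have he0 : (0:ℝ) < e := by positivity
  have hwcont : ∀ t ≥ (0:ℝ), ContinuousAt w t := fun t ht => (hwd t ht).continuousAt
  have hw'0 : ∀ t ≥ (0:ℝ), 0 ≤ w' t := fun t ht =>
    le_trans (add_nonneg (mul_nonneg (hc_nonneg t ht) (Real.rpow_nonneg (hw0 t ht) p))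
      (mul_nonneg hα.le (hk_nonneg t ht))) (hwi t ht)
  -- w is monotone on [0,∞)
  have hwmono : ∀ s t : ℝ, 0 ≤ s → s ≤ t → w s ≤ w t := by
    intro s t hs hst
    exact mono_aux (f' := w') hst
      (fun x hx => ((hwcont x (hs.trans hx.1))).continuousWithinAt)
      (fun x hx => hwd x (hs.trans hx.1.le))
      (fun x hx => hw'0 x (hs.trans hx.1.le))
  -- Claim 1 : α * ∫₀ᵗ kbar ≤ w t
  have hK : ∀ t : ℝ, 0 < t → α * (∫ τ in (0:ℝ)..t, kbar τ) ≤ w t := by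
    intro t ht
    have hkint : IntegrableOn kbar (uIcc 0 t) := by
      rw [uIcc_of_le ht.le]
      exact (hk_cont.mono (Icc_subset_Ici_self)).integrableOn_Icc
    have hprimc : ContinuousOn (fun s => ∫ τ in (0:ℝ)..s, kbar τ) (Icc 0 t) := by
      have := intervalIntegral.continuousOn_primitive_interval hkint
      rwa [uIcc_of_le ht.le] at this
    have hwIcc : ContinuousOn w (Icc 0 t) := fun x hx => (hwcont x hx.1).continuousWithinAt
    have h := mono_aux (f := fun s => w s - α * ∫ τ in (0:ℝ)..s, kbar τ)
      (f' := fun s => w' s - α * kbar s) ht.le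
      (hwIcc.sub (continuousOn_const.mul hprimc))
      (fun x hx => (hwd x hx.1.le).sub
        ((primitive_hasDerivAt hk_cont le_rfl hx.1).const_mul α))
      (fun x hx => by
        have h1 := hwi x hx.1.le
        have h2 : 0 ≤ c₀ x * w x ^ p :=
          mul_nonneg (hc_nonneg x hx.1.le) (Real.rpow_nonneg (hw0 x hx.1.le) p)
        linarith)
    simp only [intervalIntegral.integral_same, mul_zero, sub_zero] at h
    have := hw0 0 le_rfl
    linarith
  -- Claim 2 : tail integral bound
  have hC : ∀ t : ℝ, 0 < t → 0 < w t →
      (∫ τ in Ioi t, c₀ τ) ≤ w t ^ (1 - p) / (p - 1) := by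
    intro t ht hwt
    have key : ∀ T : ℝ, t ≤ T → (∫ τ in t..T, c₀ τ) ≤ w t ^ (1 - p) / (p - 1) := by
      intro T hT
      have hwpos : ∀ s ∈ Icc t T, 0 < w s := fun s hs =>
        lt_of_lt_of_le hwt (hwmono t s ht.le hs.1)
      have hcint : IntegrableOn c₀ (uIcc t T) := by
        rw [uIcc_of_le hT]
        exact (hc_cont.mono (fun x hx => le_trans ht.le hx.1)).integrableOn_Icc
      have hprimc : ContinuousOn (fun s => ∫ τ in t..s, c₀ τ) (Icc t T) := by
        have := intervalIntegral.continuousOn_primitive_interval hcint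
        rwa [uIcc_of_le hT] at this
      have hwc : ContinuousOn w (Icc t T) :=
        fun x hx => (hwcont x (ht.le.trans hx.1)).continuousWithinAt
      have h := mono_aux (f := fun s => -(w s ^ (1 - p)) / (p - 1) - ∫ τ in t..s, c₀ τ)
        (f' := fun s => w' s * w s ^ (-p) - c₀ s) hT
        (((hwc.rpow_const (fun s hs => Or.inl (hwpos s hs).ne')).neg.div_const (p-1)).sub hprimc)
        (fun x hx => by
          have hx0 : (0:ℝ) < x := ht.trans hx.1
          have hwx : 0 < w x := hwpos x ⟨hx.1.le, hx.2.le⟩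
          have hpow : HasDerivAt (fun u => w u ^ (1 - p))
              (w' x * (1 - p) * w x ^ (1 - p - 1)) x :=
            (hwd x hx0.le).rpow_const (Or.inl hwx.ne')
          have hcd := primitive_hasDerivAt hc_cont ht.le hx0
          have hcomp := (hpow.neg.div_const (p - 1)).sub hcd
          refine hcomp.congr_deriv ?_
          have h2 : (1:ℝ) - p - 1 = -p := by ring
          rw [h2]
          field_simp
          ring
        )
        (fun x hx => by
          have hx0 : (0:ℝ) < x := ht.trans hx.1
          have hwx : 0 < w x := hwpos x ⟨hx.1.le, hx.2.le⟩
          have h1 := hwi x hx0.le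
          have h2 : (0:ℝ) < w x ^ (-p) := Real.rpow_pos_of_pos hwx _
          have h3 : w x ^ p * w x ^ (-p) = 1 := by
            rw [← Real.rpow_add hwx]; simp
          have h4 : 0 ≤ α * kbar x := mul_nonneg hα.le (hk_nonneg x hx0.le)
          have h5 : (c₀ x * w x ^ p + α * kbar x) * w x ^ (-p)
              = c₀ x + α * kbar x * w x ^ (-p) := by
            rw [add_mul, mul_assoc, h3, mul_one]
          have h6 := mul_le_mul_of_nonneg_right h1 h2.le
          rw [h5] at h6
          simp only [sub_nonneg]
          nlinarith [mul_nonneg h4 h2.le])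
      simp only [intervalIntegral.integral_same, sub_zero, neg_div] at h
      have hwT : 0 ≤ w T ^ (1 - p) / (p - 1) :=
        div_nonneg (Real.rpow_nonneg (hwpos T ⟨hT, le_rfl⟩).le _) hp1.le
      linarith
    have htend : Tendsto (fun T => ∫ τ in t..T, c₀ τ) atTop
        (nhds (∫ τ in Ioi t, c₀ τ)) :=
      intervalIntegral_tendsto_integral_Ioi t (hc_int.mono_set (Ioi_subset_Ioi ht.le)) tendsto_id
    exact le_of_tendsto htend (eventually_atTop.2 ⟨t, key⟩)
  -- Final contradiction
  set B : ℝ := 1 / (α * (p - 1) ^ e) with hB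
  have hpe : (0:ℝ) < (p - 1) ^ e := Real.rpow_pos_of_pos hp1 _
  have hBpos : 0 < B := by positivity
  obtain ⟨t₁, hge, ht₁⟩ := ((hlim.eventually_ge_atTop (B + 1)).and (eventually_gt_atTop 0)).exists
  set K₁ : ℝ := ∫ τ in (0:ℝ)..t₁, kbar τ with hK₁
  set C₁ : ℝ := ∫ τ in Ioi t₁, c₀ τ with hC₁
  have hC₁0 : 0 ≤ C₁ :=
    setIntegral_nonneg measurableSet_Ioi (fun x hx => hc_nonneg x (le_of_lt (ht₁.trans hx)))
  have hCe0 : 0 ≤ C₁ ^ e := Real.rpow_nonneg hC₁0 _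
  have hK₁pos : 0 < K₁ := by
    by_contra hneg
    push_neg at hneg
    have : K₁ * C₁ ^ e ≤ 0 := mul_nonpos_of_nonpos_of_nonneg hneg hCe0
    linarith [hge]
  have hw₁pos : 0 < w t₁ := lt_of_lt_of_le (by positivity) (hK t₁ ht₁)
  have hKle : K₁ ≤ w t₁ / α := by
    rw [le_div_iff₀ hα]
    linarith [hK t₁ ht₁]
  have hCe : C₁ ^ e ≤ (w t₁)⁻¹ / (p - 1) ^ e := by
    calc C₁ ^ e ≤ (w t₁ ^ (1 - p) / (p - 1)) ^ e :=
          Real.rpow_le_rpow hC₁0 (hC t₁ ht₁ hw₁pos) he0.le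
      _ = (w t₁)⁻¹ / (p - 1) ^ e := by
          rw [Real.div_rpow (Real.rpow_nonneg hw₁pos.le _) hp1.le,
            ← Real.rpow_mul hw₁pos.le]
          have h1pe : (1 - p) * e = -1 := by
            rw [he]; field_simp; ring
          rw [h1pe, Real.rpow_neg_one]
  have hfinal : K₁ * C₁ ^ e ≤ B := by
    calc K₁ * C₁ ^ e ≤ (w t₁ / α) * ((w t₁)⁻¹ / (p - 1) ^ e) :=
          mul_le_mul hKle hCe hCe0 (div_nonneg hw₁pos.le hα.le)
      _ = B := by
          rw [hB]
          field_simp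
  linarith [hge]
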